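/- If f : ℝⁿ → ℝ ∪ {∞} is Lipschitz continuous at x̄ and subdifferentially regular there, then its calmness modulus at x̄ equals its Lipschitz modulus at x̄. -/

import Mathlib

open Filter Topology Metric Set
open scoped ENNReal

/-- Calmness modulus of `f` at `xb` relative to `X`:
`limsup_{x → xb in X, x ≠ xb} ‖f x − f xb‖ / ‖x − xb‖`, valued in `ℝ≥0∞`. -/
noncomputable def calmMod {E F : Type*} [NormedAddCommGroup E] [NormedAddCommGroup F]
    (f : E → F) (X : Set E) (xb : E) : ℝ≥0∞ :=
  Filter.limsup (fun x => ENNReal.ofReal (‖f x - f xb‖ / ‖x - xb‖)) (𝓝[X \ {xb}] xb)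

/-- Lipschitz modulus of `f` at `xb` relative to `X`:
`limsup_{x,x' → xb in X, x ≠ x'} ‖f x − f x'‖ / ‖x − x'‖`, valued in `ℝ≥0∞`. -/
noncomputable def lipMod {E F : Type*} [NormedAddCommGroup E] [NormedAddCommGroup F]
    (f : E → F) (X : Set E) (xb : E) : ℝ≥0∞ :=
  Filter.limsup (fun p : E × E => ENNReal.ofReal (‖f p.1 - f p.2‖ / ‖p.1 - p.2‖))
    (((𝓝[X] xb) ×ˢ (𝓝[X] xb)) ⊓ 𝓟 {p : E × E | p.1 ≠ p.2})

open scoped RealInnerProductSpace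

/-- `v` is a regular subgradient of `f` at `x`:
`f x' ≥ f x + ⟪v, x' − x⟫ + o(‖x' − x‖)`. -/
def regSubgrad {n : ℕ} (f : EuclideanSpace ℝ (Fin n) → ℝ)
    (x : EuclideanSpace ℝ (Fin n)) : Set (EuclideanSpace ℝ (Fin n)) :=
  {v | ∀ ε > (0 : ℝ), ∀ᶠ x' in 𝓝 x, f x' ≥ f x + ⟪v, x' - x⟫ - ε * ‖x' - x‖}

/-- `v` is a (general) subgradient of `f` at `x`: a limit of regular subgradients
`vᵛ ∈ ∂̂f(xᵛ)` along `xᵛ → x` with `f xᵛ → f x`. -/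
def genSubgrad {n : ℕ} (f : EuclideanSpace ℝ (Fin n) → ℝ)
    (x : EuclideanSpace ℝ (Fin n)) : Set (EuclideanSpace ℝ (Fin n)) :=
  {v | ∃ (xs vs : ℕ → EuclideanSpace ℝ (Fin n)),
    Tendsto xs atTop (𝓝 x) ∧ Tendsto vs atTop (𝓝 v) ∧
    Tendsto (fun k => f (xs k)) atTop (𝓝 (f x)) ∧ ∀ k, vs k ∈ regSubgrad f (xs k)}

/-- If `f` is Lipschitz continuous at `xb` and subdifferentially regular there
(the regular and general subgradient sets coincide), then the calmness modulus
of `f` at `xb` equals its Lipschitz modulus there. -/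

lemma regSubgrad_of_prox {n : ℕ} (f : EuclideanSpace ℝ (Fin n) → ℝ)
    (z w : EuclideanSpace ℝ (Fin n)) (A : ℝ) (hA : 0 < A)
    (hmin : ∀ᶠ y in 𝓝 z, f z + (A/2) * ‖z - w‖^2 ≤ f y + (A/2) * ‖y - w‖^2) :
    A • (w - z) ∈ regSubgrad f z := by
  intro ε hε
  have hball : ∀ᶠ y in 𝓝 z, ‖y - z‖ ≤ 2*ε/A := by
    rw [Metric.eventually_nhds_iff]
    exact ⟨2*ε/A, by positivity, fun {y} hy => by
      rw [dist_eq_norm] at hy; linarith⟩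
  filter_upwards [hmin, hball] with y h1 h2
  have key : ‖y - w‖^2 = ‖y - z‖^2 - 2 * ⟪y - z, w - z⟫ + ‖w - z‖^2 := by
    have : y - w = (y - z) - (w - z) := by abel
    rw [this, norm_sub_sq_real]
  have hzw : ‖z - w‖^2 = ‖w - z‖^2 := by rw [norm_sub_rev]
  have hinner : ⟪A • (w - z), y - z⟫ = A * ⟪y - z, w - z⟫ := by
    rw [real_inner_smul_left, real_inner_comm]
  have hq : (A/2) * ‖y - z‖^2 ≤ ε * ‖y - z‖ := by
    have h3 : (0:ℝ) ≤ ‖y - z‖ := norm_nonneg _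
    have h4 : A * ‖y - z‖ ≤ 2 * ε := by
      rw [le_div_iff₀ hA] at h2; linarith
    nlinarith [mul_le_mul_of_nonneg_right h4 h3]
  rw [ge_iff_le, hinner]
  nlinarith [h1, key, hzw]

lemma norm_le_of_regSubgrad {n : ℕ} (f : EuclideanSpace ℝ (Fin n) → ℝ)
    (z v : EuclideanSpace ℝ (Fin n)) (K δ : ℝ) (hδ : 0 < δ) (hK : 0 ≤ K)
    (hlip : ∀ y, ‖y - z‖ < δ → |f y - f z| ≤ K * ‖y - z‖)
    (hv : v ∈ regSubgrad f z) : ‖v‖ ≤ K := by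
  by_contra h
  push_neg at h
  have hv0 : 0 < ‖v‖ := lt_of_le_of_lt hK h
  set ε := (‖v‖ - K)/2 with hεdef
  have hε : 0 < ε := by simp only [hεdef]; linarith
  obtain ⟨δ', hδ', hδ'h⟩ := Metric.eventually_nhds_iff.1 (hv ε hε)
  set t := min δ δ' / (2 * ‖v‖) with htdef
  have ht : 0 < t := by positivity
  set y := z + t • v with hydef
  have hyz : y - z = t • v := by simp [hydef]
  have hnyz : ‖y - z‖ = t * ‖v‖ := by
    rw [hyz, norm_smul, Real.norm_eq_abs, abs_of_pos ht]
  have hsmall : ‖y - z‖ < min δ δ' := by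
    rw [hnyz, htdef]
    rw [div_mul_eq_mul_div, div_lt_iff₀ (by positivity)]
    nlinarith [lt_min hδ hδ']
  have h1 : f y ≥ f z + ⟪v, y - z⟫ - ε * ‖y - z‖ := by
    apply hδ'h
    rw [dist_eq_norm]
    exact lt_of_lt_of_le hsmall (min_le_right _ _)
  have h2 : |f y - f z| ≤ K * ‖y - z‖ :=
    hlip y (lt_of_lt_of_le hsmall (min_le_left _ _))
  have hinner : ⟪v, y - z⟫ = t * ‖v‖^2 := by
    rw [hyz, real_inner_smul_right, real_inner_self_eq_norm_sq]
  have h3 : f y - f z ≤ K * ‖y - z‖ := le_trans (le_abs_self _) h2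
  rw [hnyz] at h1 h3
  rw [hinner] at h1
  nlinarith [mul_pos ht hv0]

lemma ofReal_le_calmMod {n : ℕ} (f : EuclideanSpace ℝ (Fin n) → ℝ)
    (xb v : EuclideanSpace ℝ (Fin n)) (hv : v ∈ regSubgrad f xb)
    (c : ℝ) (hc0 : 0 ≤ c) (hc : c < ‖v‖) :
    ENNReal.ofReal c ≤ calmMod f Set.univ xb := by
  have hv0 : 0 < ‖v‖ := lt_of_le_of_lt hc0 hc
  have hvne : v ≠ 0 := by intro h; rw [h, norm_zero] at hv0; exact lt_irrefl _ hv0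
  set ε := ‖v‖ - c with hεdef
  have hε : 0 < ε := by simp only [hεdef]; linarith
  have hev := hv ε hε
  -- the curve t ↦ xb + t • v
  set m : ℝ → EuclideanSpace ℝ (Fin n) := fun t => xb + t • v with hm
  have hcont : Tendsto m (𝓝 0) (𝓝 xb) := by
    have : Continuous m := by continuity
    have h0 : m 0 = xb := by simp [hm]
    simpa [h0] using this.tendsto 0
  have hT : Tendsto m (𝓝[>] (0:ℝ)) (𝓝[Set.univ \ {xb}] xb) := by
    rw [tendsto_nhdsWithin_iff]
    constructor
    · exact hcont.mono_left nhdsWithin_le_nhds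
    · filter_upwards [self_mem_nhdsWithin] with t ht
      refine ⟨trivial, ?_⟩
      simp only [Set.mem_singleton_iff, hm]
      intro h
      have : t • v = 0 := by
        have := congrArg (· - xb) h
        simpa [add_sub_cancel_left] using this
      rcases smul_eq_zero.1 this with h' | h'
      · exact absurd h' (ne_of_gt ht)
      · exact hvne h'
  -- eventually along the curve the ratio is at least c
  have hkey : ∀ᶠ t in 𝓝[>] (0:ℝ),
      ENNReal.ofReal c ≤ ENNReal.ofReal (‖f (m t) - f xb‖ / ‖m t - xb‖) := by
    have hev' : ∀ᶠ t in 𝓝[>] (0:ℝ),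
        f (m t) ≥ f xb + ⟪v, m t - xb⟫ - ε * ‖m t - xb‖ :=
      (hcont.mono_left nhdsWithin_le_nhds).eventually hev
    filter_upwards [hev', self_mem_nhdsWithin] with t h1 ht
    have htpos : (0:ℝ) < t := ht
    have hmx : m t - xb = t • v := by simp [hm]
    have hnorm : ‖m t - xb‖ = t * ‖v‖ := by
      rw [hmx, norm_smul, Real.norm_eq_abs, abs_of_pos htpos]
    have hinner : ⟪v, m t - xb⟫ = t * ‖v‖^2 := by
      rw [hmx, real_inner_smul_right, real_inner_self_eq_norm_sq]
    rw [hnorm, hinner] at h1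
    have h2 : f (m t) - f xb ≥ c * (t * ‖v‖) := by
      have hid : ε * (t * ‖v‖) = t * ‖v‖^2 - c * (t * ‖v‖) := by
        rw [hεdef]; ring
      linarith
    have h3 : (0:ℝ) < t * ‖v‖ := by positivity
    have h4 : ‖f (m t) - f xb‖ ≥ c * (t * ‖v‖) := by
      rw [Real.norm_eq_abs]
      exact le_trans h2 (le_abs_self _)
    apply ENNReal.ofReal_le_ofReal
    rw [hnorm, le_div_iff₀ h3]
    linarith [h4]
  have hfreq : ∃ᶠ x in 𝓝[Set.univ \ {xb}] xb,
      ENNReal.ofReal c ≤ ENNReal.ofReal (‖f x - f xb‖ / ‖x - xb‖) :=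
    hT.frequently hkey.frequently
  exact Filter.le_limsup_of_frequently_le hfreq

lemma calmMod_le_lipMod {E F : Type*} [NormedAddCommGroup E] [NormedAddCommGroup F]
    (f : E → F) (xb : E) : calmMod f Set.univ xb ≤ lipMod f Set.univ xb := by
  set w : E × E → ℝ≥0∞ := fun p => ENNReal.ofReal (‖f p.1 - f p.2‖ / ‖p.1 - p.2‖) with hw
  set G := (((𝓝[Set.univ] xb) ×ˢ (𝓝[Set.univ] xb)) ⊓ 𝓟 {p : E × E | p.1 ≠ p.2}) with hG
  set mp : E → E × E := fun x => (x, xb) with hmp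
  have hT : Tendsto mp (𝓝[Set.univ \ {xb}] xb) G := by
    rw [hG, tendsto_inf]
    constructor
    · rw [nhdsWithin_univ]
      exact Filter.Tendsto.prodMk
        ((tendsto_id (x := 𝓝[Set.univ \ {xb}] xb)).mono_right nhdsWithin_le_nhds |>.mono_left le_rfl)
        tendsto_const_nhds
    · rw [tendsto_principal]
      filter_upwards [self_mem_nhdsWithin] with x hx
      exact hx.2
  calc calmMod f Set.univ xb
      = Filter.limsSup (Filter.map (w ∘ mp) (𝓝[Set.univ \ {xb}] xb)) := rfl
    _ = Filter.limsSup (Filter.map w (Filter.map mp (𝓝[Set.univ \ {xb}] xb))) := by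
        rw [Filter.map_map]
    _ ≤ Filter.limsSup (Filter.map w G) :=
        Filter.limsSup_le_limsSup_of_le (Filter.map_mono hT)
    _ = lipMod f Set.univ xb := rfl

lemma exists_lipschitz_ball {E F : Type*} [NormedAddCommGroup E] [NormedAddCommGroup F]
    (f : E → F) (xb : E) (hlip : lipMod f Set.univ xb ≠ ⊤) :
    ∃ K > (0:ℝ), ∃ ρ > (0:ℝ), ∀ x ∈ closedBall xb ρ, ∀ y ∈ closedBall xb ρ,
      ‖f x - f y‖ ≤ K * ‖x - y‖ := by
  set L := lipMod f Set.univ xb with hL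
  set K := L.toReal + 1 with hK
  have hK0 : (0:ℝ) < K := by positivity
  have hLK : L < ENNReal.ofReal K := by
    have h1 : ENNReal.ofReal K = L + 1 := by
      rw [hK, ENNReal.ofReal_add ENNReal.toReal_nonneg zero_le_one,
        ENNReal.ofReal_toReal hlip, ENNReal.ofReal_one]
    rw [h1]
    exact ENNReal.lt_add_right hlip one_ne_zero
  have hev := Filter.eventually_lt_of_limsup_lt hLK (by isBoundedDefault)
  rw [Filter.eventually_inf_principal] at hev
  rw [nhdsWithin_univ] at hev
  obtain ⟨U, hU, V, hV, hUV⟩ := Filter.mem_prod_iff.1 hev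
  obtain ⟨ε₁, hε₁, hU'⟩ := Metric.mem_nhds_iff.1 hU
  obtain ⟨ε₂, hε₂, hV'⟩ := Metric.mem_nhds_iff.1 hV
  refine ⟨K, hK0, min ε₁ ε₂ / 2, by positivity, ?_⟩
  intro x hx y hy
  by_cases hxy : x = y
  · simp [hxy]
  · have hxU : x ∈ U := hU' (by
      rw [mem_ball]
      calc dist x xb ≤ min ε₁ ε₂ / 2 := mem_closedBall.1 hx
        _ < ε₁ := by have := min_le_left ε₁ ε₂; linarith)
    have hyV : y ∈ V := hV' (by
      rw [mem_ball]
      calc dist y xb ≤ min ε₁ ε₂ / 2 := mem_closedBall.1 hy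
        _ < ε₂ := by have := min_le_right ε₁ ε₂; linarith)
    have hmem : (x, y) ∈ U ×ˢ V := ⟨hxU, hyV⟩
    have h := hUV hmem hxy
    have hratio : ‖f x - f y‖ / ‖x - y‖ < K := by
      by_contra hcon
      push_neg at hcon
      exact absurd h (not_lt.2 (by
        calc ENNReal.ofReal K ≤ ENNReal.ofReal (‖f x - f y‖ / ‖x - y‖) :=
              ENNReal.ofReal_le_ofReal hcon
          _ = _ := rfl))
    have hxy' : (0:ℝ) < ‖x - y‖ := by
      rw [norm_pos_iff, sub_ne_zero]; exact hxy
    rw [div_lt_iff₀ hxy'] at hratio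
    linarith

set_option maxHeartbeats 1000000 in
lemma fuzzy_mvt {n : ℕ} (f : EuclideanSpace ℝ (Fin n) → ℝ)
    (xb : EuclideanSpace ℝ (Fin n)) (K ρ : ℝ) (hK : 0 < K) (hρ : 0 < ρ)
    (hlip : ∀ x ∈ closedBall xb ρ, ∀ y ∈ closedBall xb ρ, ‖f x - f y‖ ≤ K * ‖x - y‖)
    (a b : EuclideanSpace ℝ (Fin n))
    (ha : a ∈ closedBall xb (ρ/4)) (hb : b ∈ closedBall xb (ρ/4))
    (c : ℝ) (hc : 0 < c) (hfab : c * ‖b - a‖ < f b - f a)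
    (δ : ℝ) (hδ : 0 < δ) (hδρ : δ ≤ ρ/2) :
    ∃ z v, ‖z - xb‖ ≤ max ‖a - xb‖ ‖b - xb‖ + δ ∧ v ∈ regSubgrad f z ∧
      c * ‖b - a‖ ≤ ⟪v, b - a⟫ := by
  set d := ‖b - a‖ with hddef
  have hd : 0 < d := by
    rcases eq_or_ne b a with h | h
    · exfalso
      have h0 : d = 0 := by rw [hddef, h, sub_self, norm_zero]
      rw [h, h0] at hfab
      simp at hfab
    · exact norm_pos_iff.2 (sub_ne_zero.2 h)
  set m := c * d with hmdef
  have hm : 0 < m := mul_pos hc hd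
  set ε₀ := f b - f a - m with hε₀def
  have hε₀ : 0 < ε₀ := by simp only [hε₀def, hmdef]; linarith
  set r := max ‖a - xb‖ ‖b - xb‖ with hrdef
  have hra : ‖a - xb‖ ≤ ρ/4 := by rw [← dist_eq_norm]; exact mem_closedBall.1 ha
  have hrb : ‖b - xb‖ ≤ ρ/4 := by rw [← dist_eq_norm]; exact mem_closedBall.1 hb
  have hr : r ≤ ρ/4 := max_le hra hrb
  have hr0 : 0 ≤ r := le_trans (norm_nonneg _) (le_max_left _ _)
  set η := min (δ/2) (ε₀/(2*K)) with hηdef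
  have hη : 0 < η := lt_min (by linarith) (by positivity)
  have hηδ : η ≤ δ/2 := min_le_left _ _
  have hηε : η ≤ ε₀/(2*K) := min_le_right _ _
  set A := 2*(2*K*ρ + m)/η^2 with hAdef
  have hA : 0 < A := by positivity
  set γ : ℝ → EuclideanSpace ℝ (Fin n) := fun t => a + t • (b - a) with hγdef
  have hγ0 : γ 0 = a := by simp [hγdef]
  have hγ1 : γ 1 = b := by simp [hγdef]
  have hγr : ∀ t, t ∈ Icc (0:ℝ) 1 → ‖γ t - xb‖ ≤ r := by
    intro t ht
    have hsplit : γ t - xb = (1-t) • (a - xb) + t • (b - xb) := by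
      simp only [hγdef]; module
    calc ‖γ t - xb‖ ≤ ‖(1-t) • (a - xb)‖ + ‖t • (b - xb)‖ := by
          rw [hsplit]; exact norm_add_le _ _
      _ = (1-t) * ‖a - xb‖ + t * ‖b - xb‖ := by
          rw [norm_smul, norm_smul, Real.norm_eq_abs, Real.norm_eq_abs,
            abs_of_nonneg (by linarith [ht.2]), abs_of_nonneg ht.1]
      _ ≤ (1-t) * r + t * r := by
          have h1 : ‖a - xb‖ ≤ r := le_max_left _ _
          have h2 : ‖b - xb‖ ≤ r := le_max_right _ _
          have := ht.1; have := ht.2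
          nlinarith
      _ = r := by ring
  set ρ' := r + δ with hρ'def
  have hρ'ρ : ρ' ≤ ρ := by simp only [hρ'def]; linarith
  have hρ'0 : 0 < ρ' := by simp only [hρ'def]; linarith
  set D : Set (ℝ × EuclideanSpace ℝ (Fin n)) := Icc (0:ℝ) 1 ×ˢ closedBall xb ρ'
    with hDdef
  set F : ℝ × EuclideanSpace ℝ (Fin n) → ℝ :=
    fun p => f p.2 + ((A/2) * ‖p.2 - γ p.1‖^2 - m * p.1) with hFdef
  have hfc : ContinuousOn f (closedBall xb ρ) := by
    apply LipschitzOnWith.continuousOn (K := Real.toNNReal K)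
    apply LipschitzOnWith.of_dist_le'
    intro x hx y hy
    rw [Real.dist_eq, dist_eq_norm, ← Real.norm_eq_abs]
    exact hlip x hx y hy
  have hcomp : IsCompact D := isCompact_Icc.prod (isCompact_closedBall xb ρ')
  have haρ' : a ∈ closedBall xb ρ' := by
    rw [mem_closedBall, dist_eq_norm]
    have : ‖a - xb‖ ≤ r := le_max_left _ _
    simp only [hρ'def]; linarith
  have hne : D.Nonempty := ⟨(0, a), ⟨⟨le_refl 0, zero_le_one⟩, haρ'⟩⟩
  have hFc : ContinuousOn F D := by
    apply ContinuousOn.add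
    · apply hfc.comp continuous_snd.continuousOn
      intro p hp
      exact closedBall_subset_closedBall hρ'ρ hp.2
    · apply Continuous.continuousOn
      have hγc : Continuous γ := by
        rw [hγdef]
        exact continuous_const.add (continuous_id.smul continuous_const)
      have h1 : Continuous fun p : ℝ × EuclideanSpace ℝ (Fin n) => p.2 - γ p.1 :=
        continuous_snd.sub (hγc.comp continuous_fst)
      exact (continuous_const.mul ((h1.norm).pow 2)).sub
        (continuous_const.mul continuous_fst)
  obtain ⟨p₀, hp₀D, hp₀min⟩ := hcomp.exists_isMinOn hne hFc
  obtain ⟨t₀, z₀⟩ := p₀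
  have ht₀ : t₀ ∈ Icc (0:ℝ) 1 := hp₀D.1
  have hz₀mem : z₀ ∈ closedBall xb ρ' := hp₀D.2
  have hz₀ρ : z₀ ∈ closedBall xb ρ := closedBall_subset_closedBall hρ'ρ hz₀mem
  have haρ : a ∈ closedBall xb ρ := closedBall_subset_closedBall hρ'ρ haρ'
  have hbρ : b ∈ closedBall xb ρ := by
    rw [mem_closedBall, dist_eq_norm]; linarith
  have hmin := isMinOn_iff.1 hp₀min
  have hηne : η ≠ 0 := ne_of_gt hη
  clear_value d m ε₀ r η A γ ρ' D F
  have h0 : f z₀ + ((A/2) * ‖z₀ - γ t₀‖^2 - m * t₀) ≤ f a := by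
    have h00 := hmin (0, a) (by rw [hDdef]; exact ⟨⟨le_refl 0, zero_le_one⟩, haρ'⟩)
    simp only [hFdef] at h00
    rw [hγ0] at h00
    simpa using h00
  -- penalty estimate
  have hfaz : f a - f z₀ ≤ 2*K*ρ := by
    have h1 : ‖f a - f z₀‖ ≤ K * ‖a - z₀‖ := hlip a haρ z₀ hz₀ρ
    have h2 : ‖a - z₀‖ ≤ 2*ρ := by
      have ht := dist_triangle a xb z₀
      rw [dist_eq_norm, dist_eq_norm, dist_eq_norm] at ht
      have h3 : ‖xb - z₀‖ = ‖z₀ - xb‖ := norm_sub_rev _ _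
      have h4 : ‖z₀ - xb‖ ≤ ρ := by rw [← dist_eq_norm]; exact mem_closedBall.1 hz₀ρ
      linarith
    have h5 : f a - f z₀ ≤ ‖f a - f z₀‖ := le_trans (le_abs_self _) (le_of_eq (Real.norm_eq_abs _).symm)
    nlinarith
  have hpen : (A/2) * ‖z₀ - γ t₀‖^2 ≤ 2*K*ρ + m := by
    have h1 : f z₀ + ((A/2) * ‖z₀ - γ t₀‖^2 - m * t₀) ≤ f a := h0
    have h2 : m * t₀ ≤ m := by nlinarith [ht₀.1, ht₀.2]
    linarith
  have hzγ : ‖z₀ - γ t₀‖ ≤ η := by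
    have hid : (A/2) * η^2 = 2*K*ρ + m := by
      rw [hAdef]; field_simp
    have h2 : ‖z₀ - γ t₀‖^2 ≤ η^2 := by
      have := hpen; rw [← hid] at this
      nlinarith
    nlinarith [norm_nonneg (z₀ - γ t₀)]
  have hz₀xb : ‖z₀ - xb‖ ≤ r + η := by
    have ht := dist_triangle z₀ (γ t₀) xb
    rw [dist_eq_norm, dist_eq_norm, dist_eq_norm] at ht
    linarith [hγr t₀ ht₀]
  -- t₀ ≠ 1
  have ht₀1 : t₀ < 1 := by
    rcases lt_or_eq_of_le ht₀.2 with h | h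
    · exact h
    · exfalso
      rw [h, hγ1, mul_one] at h0
      have h1 : f z₀ + ((A/2) * ‖z₀ - b‖^2 - m) ≤ f a := h0
      have h2 : 0 ≤ (A/2) * ‖z₀ - b‖^2 :=
        mul_nonneg (by linarith) (sq_nonneg _)
      have h3 : ‖f b - f z₀‖ ≤ K * ‖b - z₀‖ := hlip b hbρ z₀ hz₀ρ
      have h4 : ‖b - z₀‖ = ‖z₀ - γ 1‖ := by rw [hγ1, norm_sub_rev]
      have h5 : ‖z₀ - γ 1‖ ≤ η := by rw [← h] ; exact hzγ
      have h6 : f b - f z₀ ≤ K * η := by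
        have := le_trans (le_trans (le_abs_self _)
          (le_of_eq (Real.norm_eq_abs _).symm)) h3
        nlinarith [norm_nonneg (b - z₀)]
      have h7 : K * η ≤ ε₀/2 := by
        rw [le_div_iff₀ (by norm_num : (0:ℝ) < 2)]
        calc K * η * 2 ≤ K * (ε₀/(2*K)) * 2 := by nlinarith
          _ = ε₀ := by field_simp
      have h8 : f a = f b - m - ε₀ := by rw [hε₀def]; ring
      linarith
  set w := γ t₀ with hwdef
  set v := A • (w - z₀) with hvdef
  clear_value w v
  have hvinner : ⟪v, b - a⟫ = -(A * ⟪z₀ - w, b - a⟫) := by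
    rw [hvdef, real_inner_smul_left]
    have : w - z₀ = -(z₀ - w) := by abel
    rw [this, inner_neg_left]
    ring
  -- t-optimality: m ≤ ⟪v, b - a⟫
  have hv1 : m ≤ ⟪v, b - a⟫ := by
    by_contra hcon
    push_neg at hcon
    set g := m - ⟪v, b - a⟫ with hgdef
    have hg : 0 < g := by simp only [hgdef]; linarith
    clear_value g
    set s := min 1 (t₀ + g/(A*d^2)) with hsdef
    have hAd : 0 < A * d^2 := mul_pos hA (pow_pos hd 2)
    have hs1 : t₀ < s := by
      apply lt_min ht₀1
      have : 0 < g/(A*d^2) := div_pos hg hAd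
      linarith
    have hs2 : s ≤ 1 := min_le_left _ _
    have hs3 : s - t₀ ≤ g/(A*d^2) := by
      have := min_le_right 1 (t₀ + g/(A*d^2))
      simp only [hsdef]
      linarith [min_le_right 1 (t₀ + g/(A*d^2))]
    have hsmem : (s, z₀) ∈ D := by
      rw [hDdef]; exact ⟨⟨by linarith [ht₀.1], hs2⟩, hz₀mem⟩
    have hFs := hmin (s, z₀) hsmem
    -- expansion of the quadratic
    have hγs : γ s = w + (s - t₀) • (b - a) := by
      simp only [hγdef, hwdef]; module
    have hexp : ‖z₀ - γ s‖^2
        = ‖z₀ - w‖^2 - 2*(s-t₀)*⟪z₀ - w, b - a⟫ + (s-t₀)^2*d^2 := by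
      have h1 : z₀ - γ s = (z₀ - w) - (s-t₀) • (b - a) := by
        rw [hγs]; abel
      rw [h1, norm_sub_sq_real, real_inner_smul_right, norm_smul,
        Real.norm_eq_abs, mul_pow, sq_abs, hddef]
      ring
    simp only [hFdef] at hFs
    have hFineq : f z₀ + ((A/2) * ‖z₀ - w‖^2 - m * t₀)
        ≤ f z₀ + ((A/2) * ‖z₀ - γ s‖^2 - m * s) := by rw [hwdef]; exact hFs
    have hq : m * (s - t₀) ≤ -(A*(s-t₀)*⟪z₀ - w, b - a⟫) + (A/2)*(s-t₀)^2*d^2 := by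
      have : (A/2) * ‖z₀ - γ s‖^2
          = (A/2) * ‖z₀ - w‖^2 - A*(s-t₀)*⟪z₀ - w, b - a⟫ + (A/2)*(s-t₀)^2*d^2 := by
        rw [hexp]; ring
      linarith
    have hq2 : m * (s - t₀) ≤ (s-t₀)*⟪v, b - a⟫ + (A/2)*(s-t₀)^2*d^2 := by
      rw [hvinner]; linarith [hq]
    have hs4 : (s - t₀) * (A * d^2) ≤ g := by
      rw [← le_div_iff₀ hAd]; exact hs3
    have hst : 0 < s - t₀ := by linarith
    clear_value s
    have hq3 : (A/2)*(s-t₀)^2*d^2 ≤ (s-t₀)*g/2 := by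
      have hp := mul_le_mul_of_nonneg_left hs4 (le_of_lt hst)
      have hEq : (A/2)*(s-t₀)^2*d^2 = ((s-t₀)*((s-t₀)*(A*d^2)))/2 := by ring
      linarith
    have hq4 : m * (s - t₀) ≤ (s-t₀)*⟪v, b - a⟫ + (s-t₀)*g/2 := by linarith
    have hq5 : m ≤ ⟪v, b - a⟫ + g/2 := by
      have hmul : (s-t₀)*m ≤ (s-t₀)*(⟪v, b - a⟫ + g/2) := by
        have hrw : (s-t₀)*(⟪v, b - a⟫ + g/2) = (s-t₀)*⟪v, b - a⟫ + (s-t₀)*g/2 := by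
          ring
        have hrw2 : (s-t₀)*m = m*(s-t₀) := by ring
        rw [hrw, hrw2]
        exact hq4
      exact le_of_mul_le_mul_left hmul hst
    simp only [hgdef] at hq5
    linarith
  -- z-optimality: v is a regular subgradient at z₀
  have hz₀int : z₀ ∈ ball xb ρ' := by
    rw [mem_ball, dist_eq_norm]
    simp only [hρ'def]
    linarith
  have hvreg : v ∈ regSubgrad f z₀ := by
    rw [hvdef]
    apply regSubgrad_of_prox f z₀ w A hA
    filter_upwards [isOpen_ball.mem_nhds hz₀int] with y hy
    have hymem : (t₀, y) ∈ D := by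
      rw [hDdef]; exact ⟨ht₀, ball_subset_closedBall hy⟩
    have h2 := hmin (t₀, y) hymem
    simp only [hFdef] at h2
    rw [hwdef]
    linarith
  refine ⟨z₀, v, ?_, hvreg, ?_⟩
  · rw [hrdef] at hz₀xb; linarith
  · exact hv1


theorem calmMod_eq_lipMod_of_subdiff_regular {n : ℕ}
    (f : EuclideanSpace ℝ (Fin n) → ℝ) (xb : EuclideanSpace ℝ (Fin n))
    (hlip : lipMod f Set.univ xb ≠ ⊤)
    (hreg : regSubgrad f xb = genSubgrad f xb) :
    calmMod f Set.univ xb = lipMod f Set.univ xb := by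
  refine le_antisymm (calmMod_le_lipMod f xb) ?_
  apply ENNReal.le_of_forall_nnreal_lt
  intro q hq
  obtain ⟨K, hK, ρ, hρ, hlipb⟩ := exists_lipschitz_ball f xb hlip
  obtain ⟨c', hc'1, hc'2⟩ := exists_between hq
  have hc'top : c' ≠ ⊤ := by
    intro h
    rw [h] at hc'2
    exact absurd hc'2 not_top_lt
  set c := c'.toReal with hcdef
  have hcq : (q:ℝ) < c := by
    have h := (ENNReal.toReal_lt_toReal ENNReal.coe_ne_top hc'top).2 hc'1
    rwa [ENNReal.coe_toReal] at h
  have hc0 : 0 < c := lt_of_le_of_lt q.coe_nonneg hcq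
  have hofc : ENNReal.ofReal c < lipMod f Set.univ xb := by
    rw [hcdef, ENNReal.ofReal_toReal hc'top]; exact hc'2
  unfold lipMod at hofc
  simp only [nhdsWithin_univ] at hofc
  have hfreq := Filter.frequently_lt_of_lt_limsup (by isBoundedDefault) hofc
  -- for each k, find a nearby point with a regular subgradient of norm in [c, K]
  have key : ∀ k : ℕ, ∃ z v : EuclideanSpace ℝ (Fin n),
      ‖z - xb‖ ≤ 2 * min (ρ/4) (1/((k:ℝ)+1)) ∧ v ∈ regSubgrad f z ∧
      c ≤ ‖v‖ ∧ ‖v‖ ≤ K := by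
    intro k
    set ε := min (ρ/4) (1/((k:ℝ)+1)) with hεdef
    have hε : 0 < ε := lt_min (by linarith) (by positivity)
    have hερ : ε ≤ ρ/4 := min_le_left _ _
    have hmem1 : (ball xb ε ×ˢ ball xb ε) ∈ ((𝓝 xb) ×ˢ (𝓝 xb) : Filter _) :=
      prod_mem_prod (ball_mem_nhds _ hε) (ball_mem_nhds _ hε)
    have h1 : ∀ᶠ p in ((𝓝 xb) ×ˢ (𝓝 xb) ⊓ 𝓟 {p : _ × _ | p.1 ≠ p.2}),
        p ∈ ball xb ε ×ˢ ball xb ε := Filter.mem_inf_of_left hmem1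
    have h2 : ∀ᶠ p in ((𝓝 xb) ×ˢ (𝓝 xb) ⊓ 𝓟 {p : _ × _ | p.1 ≠ p.2}),
        p.1 ≠ p.2 := Filter.mem_inf_of_right (Filter.mem_principal_self _)
    obtain ⟨p, hpc, hpball, hpS⟩ := (hfreq.and_eventually (h1.and h2)).exists
    set x := p.1 with hx
    set y := p.2 with hy
    have hxy : x ≠ y := hpS
    have hxyn : 0 < ‖x - y‖ := norm_pos_iff.2 (sub_ne_zero.2 hxy)
    have hlt : c < ‖f x - f y‖ / ‖x - y‖ := by
      by_contra hcon
      push_neg at hcon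
      exact absurd hpc (not_lt.2 (ENNReal.ofReal_le_ofReal hcon))
    have hgt : c * ‖x - y‖ < ‖f x - f y‖ := (lt_div_iff₀ hxyn).1 hlt
    have hxball : x ∈ closedBall xb (ρ/4) :=
      closedBall_subset_closedBall hερ (ball_subset_closedBall hpball.1)
    have hyball : y ∈ closedBall xb (ρ/4) :=
      closedBall_subset_closedBall hερ (ball_subset_closedBall hpball.2)
    have hxn : ‖x - xb‖ < ε := by rw [← dist_eq_norm]; exact hpball.1
    have hyn : ‖y - xb‖ < ε := by rw [← dist_eq_norm]; exact hpball.2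
    -- orient the pair so the function increases
    obtain ⟨a, b, haball, hbball, han, hbn, hab⟩ :
        ∃ a b : EuclideanSpace ℝ (Fin n), a ∈ closedBall xb (ρ/4) ∧
          b ∈ closedBall xb (ρ/4) ∧ ‖a - xb‖ < ε ∧ ‖b - xb‖ < ε ∧
          c * ‖b - a‖ < f b - f a := by
      rcases le_total (f x) (f y) with h | h
      · refine ⟨x, y, hxball, hyball, hxn, hyn, ?_⟩
        have : ‖f x - f y‖ = f y - f x := by
          rw [Real.norm_eq_abs, abs_of_nonpos (by linarith)]; ring
        rw [norm_sub_rev x y] at hgt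
        linarith [hgt, this.symm.le]
      · refine ⟨y, x, hyball, hxball, hyn, hxn, ?_⟩
        have : ‖f x - f y‖ = f x - f y := by
          rw [Real.norm_eq_abs, abs_of_nonneg (by linarith)]
        linarith [hgt, this.symm.le]
    obtain ⟨z, v, hz, hvreg, hvinner⟩ :=
      fuzzy_mvt f xb K ρ hK hρ hlipb a b haball hbball c hc0 hab ε hε
        (by linarith)
    have hban : 0 < ‖b - a‖ := by
      by_contra hcon
      push_neg at hcon
      have : ‖b - a‖ = 0 := le_antisymm hcon (norm_nonneg _)
      rw [this] at hab
      have hba : b = a := by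
        rwa [norm_eq_zero, sub_eq_zero] at this
      rw [hba] at hab
      simp at hab
    have hvnorm : c ≤ ‖v‖ := by
      have h3 : ⟪v, b - a⟫ ≤ ‖v‖ * ‖b - a‖ := real_inner_le_norm _ _
      have h4 : c * ‖b - a‖ ≤ ‖v‖ * ‖b - a‖ := le_trans hvinner h3
      exact le_of_mul_le_mul_right h4 hban
    have hzloc : ‖z - xb‖ ≤ 2 * ε := by
      have := max_lt han hbn
      linarith [hz, le_of_lt this]
    have hzρ : z ∈ closedBall xb ρ := by
      rw [mem_closedBall, dist_eq_norm]
      linarith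
    have hvK : ‖v‖ ≤ K := by
      apply norm_le_of_regSubgrad f z v K (ρ/2) (by linarith) (le_of_lt hK) _ hvreg
      intro w hw
      have hwρ : w ∈ closedBall xb ρ := by
        rw [mem_closedBall, dist_eq_norm]
        have := norm_add_le (w - z) (z - xb)
        have heq : w - z + (z - xb) = w - xb := by abel
        rw [heq] at this
        linarith
      have := hlipb w hwρ z hzρ
      rwa [Real.norm_eq_abs] at this
    exact ⟨z, v, hzloc, hvreg, hvnorm, hvK⟩
  choose zs vs hz1 hz2 hz3 hz4 using key
  have hbound : ∀ k : ℕ, 2 * min (ρ/4) (1/((k:ℝ)+1)) ≤ 2/((k:ℝ)+1) := by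
    intro k
    have h := min_le_right (ρ/4) (1/((k:ℝ)+1))
    have : 2 * (1/((k:ℝ)+1)) = 2/((k:ℝ)+1) := by ring
    linarith
  have hlim0 : Tendsto (fun k : ℕ => 2/((k:ℝ)+1)) atTop (𝓝 0) := by
    have := (tendsto_one_div_add_atTop_nhds_zero_nat :
      Tendsto (fun n : ℕ => 1 / ((n : ℝ) + 1)) atTop (𝓝 0)).const_mul 2
    simpa [mul_one_div, div_eq_mul_inv] using this
  have hzs : Tendsto zs atTop (𝓝 xb) := by
    rw [tendsto_iff_dist_tendsto_zero]
    apply squeeze_zero (fun k => dist_nonneg) _ hlim0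
    intro k
    rw [dist_eq_norm]
    exact le_trans (hz1 k) (hbound k)
  have hzsmem : ∀ k, zs k ∈ closedBall xb ρ := by
    intro k
    rw [mem_closedBall, dist_eq_norm]
    have h := hz1 k
    have h2 : 2 * min (ρ/4) (1/((k:ℝ)+1)) ≤ 2 * (ρ/4) := by
      have := min_le_left (ρ/4) (1/((k:ℝ)+1))
      linarith
    linarith
  have hxbmem : xb ∈ closedBall xb ρ := by
    rw [mem_closedBall, dist_self]; linarith
  have hfzs : Tendsto (fun k => f (zs k)) atTop (𝓝 (f xb)) := by
    rw [tendsto_iff_dist_tendsto_zero]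
    apply squeeze_zero (fun k => dist_nonneg) _
      (show Tendsto (fun k : ℕ => K * (2/((k:ℝ)+1))) atTop (𝓝 0) by
        simpa using hlim0.const_mul K)
    intro k
    rw [Real.dist_eq, ← Real.norm_eq_abs]
    calc ‖f (zs k) - f xb‖ ≤ K * ‖zs k - xb‖ := hlipb _ (hzsmem k) _ hxbmem
      _ ≤ K * (2/((k:ℝ)+1)) := by
          apply mul_le_mul_of_nonneg_left _ (le_of_lt hK)
          exact le_trans (hz1 k) (hbound k)
  have hvball : ∀ k, vs k ∈ closedBall (0 : EuclideanSpace ℝ (Fin n)) K := by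
    intro k
    rw [mem_closedBall, dist_zero_right]
    exact hz4 k
  obtain ⟨v, hvmem, φ, hφ, hvφ⟩ :=
    (isCompact_closedBall (0 : EuclideanSpace ℝ (Fin n)) K).tendsto_subseq hvball
  have hgen : v ∈ genSubgrad f xb :=
    ⟨zs ∘ φ, vs ∘ φ, hzs.comp hφ.tendsto_atTop, hvφ,
      hfzs.comp hφ.tendsto_atTop, fun k => hz2 (φ k)⟩
  have hvreg : v ∈ regSubgrad f xb := by rw [hreg]; exact hgen
  have hnv : c ≤ ‖v‖ :=
    ge_of_tendsto' hvφ.norm (fun k => hz3 (φ k)) |>.trans_eq' rfl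
  have hfin := ofReal_le_calmMod f xb v hvreg (q:ℝ) q.coe_nonneg
    (lt_of_lt_of_le hcq hnv)
  rwa [ENNReal.ofReal_coe_nnreal] at hfin
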